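/- Let g be a Lie algebra and r ∈ g ∧ g with [r, r] = 0 (classical Yang–Baxter equation, where [,] is the Schouten bracket on Λg). Then δ(X) := ad_X(r) = [X ⊗ 1 + 1 ⊗ X, r] defines a Lie bialgebra structure on g: δ satisfies the co-Jacobi identity and the 1-cocycle condition δ([X,Y]) = ad_X δ(Y) − ad_Y δ(X). -/

import Mathlib

open TensorProduct

attribute [local instance 100] LieRing.ofAssociativeRing

variable {K g : Type*} [Field K] [CharZero K] [LieRing g] [LieAlgebra K g]

/-- The cyclic permutation `x ⊗ y ⊗ z ↦ y ⊗ z ⊗ x`. -/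
noncomputable def cyc3 (K g : Type*) [Field K] [AddCommGroup g] [Module K g] :
    g ⊗[K] (g ⊗[K] g) →ₗ[K] g ⊗[K] (g ⊗[K] g) :=
  (TensorProduct.assoc K g g g).toLinearMap ∘ₗ
    (TensorProduct.comm K g (g ⊗[K] g)).toLinearMap

/-- Co-Jacobi identity `(1 + τ + τ²)(δ ⊗ id)δ = 0`. -/
noncomputable def CoJacobi3 (δ : g →ₗ[K] g ⊗[K] g) : Prop :=
  ∀ X : g,
    (let J : g →ₗ[K] g ⊗[K] (g ⊗[K] g) :=
      (TensorProduct.assoc K g g g).toLinearMap ∘ₗ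
        (TensorProduct.map δ LinearMap.id) ∘ₗ δ;
     J X + cyc3 K g (J X) + cyc3 K g (cyc3 K g (J X))) = 0

/-- The adjoint action of `X` on `g ⊗ g`: `ad_X ⊗ 1 + 1 ⊗ ad_X`, linearly in `X`. -/
noncomputable def adTensorLin (K g : Type*) [Field K] [LieRing g] [LieAlgebra K g] :
    g →ₗ[K] (g ⊗[K] g →ₗ[K] g ⊗[K] g) :=
  (((TensorProduct.mapBilinear (RingHom.id K) g g g g).flip LinearMap.id) ∘ₗ
      (LieAlgebra.ad K g).toLinearMap)
    + ((TensorProduct.mapBilinear (RingHom.id K) g g g g LinearMap.id) ∘ₗ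
      (LieAlgebra.ad K g).toLinearMap)

/-- Drinfeld's triangular cobracket `δ(X) = [X ⊗ 1 + 1 ⊗ X, r] = ad_X(r)`. -/
noncomputable def triangularCobracket (r : g ⊗[K] g) : g →ₗ[K] g ⊗[K] g :=
  (adTensorLin K g).flip r

set_option linter.unusedSectionVars false in
lemma tlb_adT_tmul (X u v : g) :
    adTensorLin K g X (u ⊗ₜ[K] v) = ⁅X, u⁆ ⊗ₜ[K] v + u ⊗ₜ[K] ⁅X, v⁆ := by
  simp [adTensorLin, TensorProduct.mapBilinear_apply, LieAlgebra.ad_apply]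

set_option linter.unusedSectionVars false in
lemma tlb_cyc3_tmul (x y z : g) :
    cyc3 K g (x ⊗ₜ[K] (y ⊗ₜ[K] z)) = y ⊗ₜ[K] (z ⊗ₜ[K] x) := by
  simp [cyc3]

set_option linter.unusedSectionVars false in
lemma tlb_tc_apply (r : g ⊗[K] g) (X : g) :
    triangularCobracket r X = adTensorLin K g X r := rfl

set_option linter.unusedSectionVars false in
lemma tlb_adT_comm (X : g) (t : g ⊗[K] g) :
    TensorProduct.comm K g g (adTensorLin K g X t)
      = adTensorLin K g X (TensorProduct.comm K g g t) := by
  induction t using TensorProduct.induction_on with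
  | zero => simp
  | tmul u v => simp [tlb_adT_tmul]; abel
  | add x y hx hy => simp [map_add, hx, hy]

set_option linter.unusedSectionVars false in
lemma tlb_adT_lie (X Y : g) (t : g ⊗[K] g) :
    adTensorLin K g ⁅X, Y⁆ t
      = adTensorLin K g X (adTensorLin K g Y t)
        - adTensorLin K g Y (adTensorLin K g X t) := by
  induction t using TensorProduct.induction_on with
  | zero => simp
  | tmul u v =>
      simp only [tlb_adT_tmul, map_add, lie_lie, sub_tmul, tmul_sub, add_tmul, tmul_add]
      abel
  | add x y hx hy => simp only [map_add, hx, hy]; abel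

set_option linter.unusedSectionVars false in
lemma tlb_key1 (X p q : g) : ⁅⁅X, q⁆, p⁆ - ⁅⁅X, p⁆, q⁆ = -⁅X, ⁅p, q⁆⁆ := by
  rw [leibniz_lie X p q, ← lie_skew p ⁅X, q⁆]; abel

set_option linter.unusedSectionVars false in
lemma tlb_key2 (X p q : g) : ⁅⁅X, p⁆, q⁆ - ⁅⁅X, q⁆, p⁆ = ⁅X, ⁅p, q⁆⁆ := by
  rw [leibniz_lie X p q, ← lie_skew p ⁅X, q⁆]; abel

/-- Drinfeld's triangular Lie bialgebras: if `r ∈ Λ²g ⊂ g ⊗ g`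
(antisymmetric, `r = Σ aᵢ ⊗ bᵢ`) satisfies the classical Yang-Baxter equation
`[r,r] = 0` (algebraic Schouten bracket), then `δ(X) := ad_X(r)` is a Lie bialgebra
cobracket on `g`: it lands in `Λ²g`, satisfies the co-Jacobi identity and the
1-cocycle condition `δ([X,Y]) = ad_X δ(Y) − ad_Y δ(X)`. -/
theorem triangular_lie_bialgebra [FiniteDimensional K g]
    (n : ℕ) (a b : Fin n → g) (r : g ⊗[K] g)
    (hr : r = ∑ i, a i ⊗ₜ[K] b i)
    (hskew : TensorProduct.comm K g g r = - r)
    (hCYBE : ∑ i, ∑ j,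
        ((⁅a i, a j⁆ ⊗ₜ[K] (b i ⊗ₜ[K] b j))
          + (a i ⊗ₜ[K] (⁅b i, a j⁆ ⊗ₜ[K] b j))
          + (a i ⊗ₜ[K] (a j ⊗ₜ[K] ⁅b i, b j⁆))) = 0) :
    (∀ X : g, TensorProduct.comm K g g (triangularCobracket r X)
        = - triangularCobracket r X) ∧
    CoJacobi3 (triangularCobracket r) ∧
    (∀ X Y : g, triangularCobracket r ⁅X, Y⁆
        = adTensorLin K g X (triangularCobracket r Y)
          - adTensorLin K g Y (triangularCobracket r X)) := by
  refine ⟨?_, ?_, ?_⟩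
  · intro X
    rw [tlb_tc_apply, tlb_adT_comm, hskew, map_neg, ← tlb_tc_apply]
  · -- co-Jacobi
    have hba : (∑ i, b i ⊗ₜ[K] a i) = -∑ i, a i ⊗ₜ[K] b i := by
      rw [← hr, ← hskew, hr, map_sum]
      exact (Finset.sum_congr rfl fun i _ => (comm_tmul K g g (a i) (b i)).symm).symm
    have hflip : ∀ φ : g ⊗[K] g →ₗ[K] g ⊗[K] (g ⊗[K] g),
        ∑ i, φ (a i ⊗ₜ[K] b i) = -∑ i, φ (b i ⊗ₜ[K] a i) := by
      intro φ
      have h2 := congrArg φ hba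
      rw [map_sum, map_neg, map_sum] at h2
      rw [h2, neg_neg]
    have hδ : ∀ Z : g, triangularCobracket r Z
        = ∑ i, (⁅Z, a i⁆ ⊗ₜ[K] b i + a i ⊗ₜ[K] ⁅Z, b i⁆) := by
      intro Z
      rw [tlb_tc_apply, hr, map_sum]
      exact Finset.sum_congr rfl fun i _ => tlb_adT_tmul Z (a i) (b i)
    unfold CoJacobi3
    intro X
    dsimp only
    simp only [LinearMap.comp_apply, LinearEquiv.coe_coe, hδ, map_sum, map_add, map_tmul,
      LinearMap.id_coe, id_eq, sum_tmul, add_tmul, assoc_tmul, tlb_cyc3_tmul,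
      Finset.sum_add_distrib]
    -- the nine transformation identities
    have hI : (∑ i : Fin n, ∑ j : Fin n, ⁅⁅X, a i⁆, a j⁆ ⊗ₜ[K] (b j ⊗ₜ[K] b i))
        + (∑ i : Fin n, ∑ j : Fin n, ⁅⁅X, a i⁆, b j⁆ ⊗ₜ[K] (b i ⊗ₜ[K] a j))
        = -∑ i : Fin n, ∑ j : Fin n, ⁅X, ⁅a i, a j⁆⁆ ⊗ₜ[K] (b i ⊗ₜ[K] b j) := by
      have t1 : (∑ i : Fin n, ∑ j : Fin n, ⁅⁅X, a i⁆, a j⁆ ⊗ₜ[K] (b j ⊗ₜ[K] b i))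
          = ∑ i : Fin n, ∑ j : Fin n, ⁅⁅X, a j⁆, a i⁆ ⊗ₜ[K] (b i ⊗ₜ[K] b j) :=
        Finset.sum_comm
      have c2 : (∑ i : Fin n, ∑ j : Fin n, ⁅⁅X, a i⁆, b j⁆ ⊗ₜ[K] (b i ⊗ₜ[K] a j))
          = -∑ i : Fin n, ∑ j : Fin n, ⁅⁅X, a i⁆, a j⁆ ⊗ₜ[K] (b i ⊗ₜ[K] b j) := by
        rw [← Finset.sum_neg_distrib]
        refine Finset.sum_congr rfl fun i _ => ?_
        simpa [tmul_sub, sub_tmul, tmul_add, add_tmul] using hflip ((TensorProduct.map (LieAlgebra.ad K g ⁅X, a i⁆)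
          (TensorProduct.mk K g g (b i))) ∘ₗ (TensorProduct.comm K g g).toLinearMap)
      rw [t1, c2, ← sub_eq_add_neg]
      simp only [← Finset.sum_sub_distrib, ← Finset.sum_neg_distrib]
      refine Finset.sum_congr rfl fun i _ => Finset.sum_congr rfl fun j _ => ?_
      rw [← sub_tmul, tlb_key1 X (a i) (a j), neg_tmul]
    have hII : (∑ i : Fin n, ∑ j : Fin n, a j ⊗ₜ[K] (⁅⁅X, a i⁆, b j⁆ ⊗ₜ[K] b i))
        + (∑ i : Fin n, ∑ j : Fin n, b i ⊗ₜ[K] (⁅⁅X, a i⁆, a j⁆ ⊗ₜ[K] b j))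
        = -∑ i : Fin n, ∑ j : Fin n, a i ⊗ₜ[K] (⁅X, ⁅b i, a j⁆⁆ ⊗ₜ[K] b j) := by
      have t2a : (∑ i : Fin n, ∑ j : Fin n, a j ⊗ₜ[K] (⁅⁅X, a i⁆, b j⁆ ⊗ₜ[K] b i))
          = -∑ i : Fin n, ∑ j : Fin n, b j ⊗ₜ[K] (⁅⁅X, a i⁆, a j⁆ ⊗ₜ[K] b i) := by
        rw [← Finset.sum_neg_distrib]
        refine Finset.sum_congr rfl fun i _ => ?_
        simpa [tmul_sub, sub_tmul, tmul_add, add_tmul] using hflip (TensorProduct.map LinearMap.id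
          (((TensorProduct.mk K g g).flip (b i)) ∘ₗ (LieAlgebra.ad K g ⁅X, a i⁆)))
      have t2b : (∑ i : Fin n, ∑ j : Fin n, b j ⊗ₜ[K] (⁅⁅X, a i⁆, a j⁆ ⊗ₜ[K] b i))
          = ∑ i : Fin n, ∑ j : Fin n, b i ⊗ₜ[K] (⁅⁅X, a j⁆, a i⁆ ⊗ₜ[K] b j) :=
        Finset.sum_comm
      have t2c : (∑ i : Fin n, ∑ j : Fin n, a j ⊗ₜ[K] (⁅⁅X, a i⁆, b j⁆ ⊗ₜ[K] b i))
          + (∑ i : Fin n, ∑ j : Fin n, b i ⊗ₜ[K] (⁅⁅X, a i⁆, a j⁆ ⊗ₜ[K] b j))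
          = ∑ i : Fin n, ∑ j : Fin n, b i ⊗ₜ[K] (⁅X, ⁅a i, a j⁆⁆ ⊗ₜ[K] b j) := by
        rw [t2a, t2b, neg_add_eq_sub]
        simp only [← Finset.sum_sub_distrib]
        refine Finset.sum_congr rfl fun i _ => Finset.sum_congr rfl fun j _ => ?_
        rw [← tmul_sub, ← sub_tmul, tlb_key2 X (a i) (a j)]
      rw [t2c]
      simpa [tmul_sub, sub_tmul, tmul_add, add_tmul] using hflip (∑ j, (TensorProduct.map LinearMap.id
        (((TensorProduct.mk K g g).flip (b j)) ∘ₗ (LieAlgebra.ad K g X)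
          ∘ₗ ((LieAlgebra.ad K g).toLinearMap.flip (a j))))
        ∘ₗ (TensorProduct.comm K g g).toLinearMap)
    have hIII : (∑ i : Fin n, ∑ j : Fin n, b j ⊗ₜ[K] (b i ⊗ₜ[K] ⁅⁅X, a i⁆, a j⁆))
        + (∑ i : Fin n, ∑ j : Fin n, b i ⊗ₜ[K] (a j ⊗ₜ[K] ⁅⁅X, a i⁆, b j⁆))
        = -∑ i : Fin n, ∑ j : Fin n, a i ⊗ₜ[K] (a j ⊗ₜ[K] ⁅X, ⁅b i, b j⁆⁆) := by
      have t3a : (∑ i : Fin n, ∑ j : Fin n, b i ⊗ₜ[K] (a j ⊗ₜ[K] ⁅⁅X, a i⁆, b j⁆))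
          = -∑ i : Fin n, ∑ j : Fin n, b i ⊗ₜ[K] (b j ⊗ₜ[K] ⁅⁅X, a i⁆, a j⁆) := by
        rw [← Finset.sum_neg_distrib]
        refine Finset.sum_congr rfl fun i _ => ?_
        simpa [tmul_sub, sub_tmul, tmul_add, add_tmul] using hflip ((TensorProduct.mk K g (g ⊗[K] g) (b i))
          ∘ₗ (TensorProduct.map LinearMap.id (LieAlgebra.ad K g ⁅X, a i⁆)))
      have t3b : (∑ i : Fin n, ∑ j : Fin n, b j ⊗ₜ[K] (b i ⊗ₜ[K] ⁅⁅X, a i⁆, a j⁆))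
          = ∑ i : Fin n, ∑ j : Fin n, b i ⊗ₜ[K] (b j ⊗ₜ[K] ⁅⁅X, a j⁆, a i⁆) :=
        Finset.sum_comm
      have t3c : (∑ i : Fin n, ∑ j : Fin n, b j ⊗ₜ[K] (b i ⊗ₜ[K] ⁅⁅X, a i⁆, a j⁆))
          + (∑ i : Fin n, ∑ j : Fin n, b i ⊗ₜ[K] (a j ⊗ₜ[K] ⁅⁅X, a i⁆, b j⁆))
          = -∑ i : Fin n, ∑ j : Fin n, b i ⊗ₜ[K] (b j ⊗ₜ[K] ⁅X, ⁅a i, a j⁆⁆) := by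
        rw [t3a, t3b, ← sub_eq_add_neg]
        simp only [← Finset.sum_sub_distrib, ← Finset.sum_neg_distrib]
        refine Finset.sum_congr rfl fun i _ => Finset.sum_congr rfl fun j _ => ?_
        rw [← tmul_sub, ← tmul_sub, tlb_key1 X (a i) (a j), tmul_neg, tmul_neg]
      have t3d : (∑ i : Fin n, ∑ j : Fin n, b i ⊗ₜ[K] (b j ⊗ₜ[K] ⁅X, ⁅a i, a j⁆⁆))
          = -∑ i : Fin n, ∑ j : Fin n, a i ⊗ₜ[K] (b j ⊗ₜ[K] ⁅X, ⁅b i, a j⁆⁆) := by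
        simpa [tmul_sub, sub_tmul, tmul_add, add_tmul] using hflip (∑ j, (TensorProduct.map LinearMap.id
          ((TensorProduct.mk K g g (b j)) ∘ₗ (LieAlgebra.ad K g X)
            ∘ₗ ((LieAlgebra.ad K g).toLinearMap.flip (a j))))
          ∘ₗ (TensorProduct.comm K g g).toLinearMap)
      have t3e : (∑ i : Fin n, ∑ j : Fin n, a i ⊗ₜ[K] (b j ⊗ₜ[K] ⁅X, ⁅b i, a j⁆⁆))
          = -∑ i : Fin n, ∑ j : Fin n, a i ⊗ₜ[K] (a j ⊗ₜ[K] ⁅X, ⁅b i, b j⁆⁆) := by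
        rw [← Finset.sum_neg_distrib]
        refine Finset.sum_congr rfl fun i _ => ?_
        simpa [tmul_sub, sub_tmul, tmul_add, add_tmul] using hflip ((TensorProduct.mk K g (g ⊗[K] g) (a i))
          ∘ₗ (TensorProduct.map LinearMap.id
            ((LieAlgebra.ad K g X) ∘ₗ (LieAlgebra.ad K g (b i))))
          ∘ₗ (TensorProduct.comm K g g).toLinearMap)
      rw [t3c, t3d, neg_neg, t3e]
    have hIV : (∑ i : Fin n, ∑ j : Fin n, ⁅a i, a j⁆ ⊗ₜ[K] (b j ⊗ₜ[K] ⁅X, b i⁆))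
        = -∑ i : Fin n, ∑ j : Fin n, ⁅a i, a j⁆ ⊗ₜ[K] (b i ⊗ₜ[K] ⁅X, b j⁆) := by
      rw [Finset.sum_comm]
      simp only [← Finset.sum_neg_distrib]
      refine Finset.sum_congr rfl fun j _ => Finset.sum_congr rfl fun i _ => ?_
      rw [← neg_tmul, lie_skew]
    have hV : (∑ i : Fin n, ∑ j : Fin n, a j ⊗ₜ[K] (⁅a i, b j⁆ ⊗ₜ[K] ⁅X, b i⁆))
        = -∑ i : Fin n, ∑ j : Fin n, a i ⊗ₜ[K] (⁅b i, a j⁆ ⊗ₜ[K] ⁅X, b j⁆) := by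
      rw [Finset.sum_comm]
      simp only [← Finset.sum_neg_distrib]
      refine Finset.sum_congr rfl fun j _ => Finset.sum_congr rfl fun i _ => ?_
      rw [← tmul_neg, ← neg_tmul, lie_skew]
    have hVI : (∑ i : Fin n, ∑ j : Fin n, b j ⊗ₜ[K] (⁅X, b i⁆ ⊗ₜ[K] ⁅a i, a j⁆))
        = -∑ i : Fin n, ∑ j : Fin n, a i ⊗ₜ[K] (⁅X, a j⁆ ⊗ₜ[K] ⁅b i, b j⁆) := by
      have t6a : (∑ i : Fin n, ∑ j : Fin n, b j ⊗ₜ[K] (⁅X, b i⁆ ⊗ₜ[K] ⁅a i, a j⁆))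
          = -∑ i : Fin n, ∑ j : Fin n, b j ⊗ₜ[K] (⁅X, a i⁆ ⊗ₜ[K] ⁅b i, a j⁆) := by
        simpa [tmul_sub, sub_tmul, tmul_add, add_tmul] using hflip (∑ j, (TensorProduct.mk K g (g ⊗[K] g) (b j))
          ∘ₗ (TensorProduct.map (LieAlgebra.ad K g X)
            ((LieAlgebra.ad K g).toLinearMap.flip (a j)))
          ∘ₗ (TensorProduct.comm K g g).toLinearMap)
      have t6b : (∑ i : Fin n, ∑ j : Fin n, b j ⊗ₜ[K] (⁅X, a i⁆ ⊗ₜ[K] ⁅b i, a j⁆))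
          = -∑ i : Fin n, ∑ j : Fin n, a j ⊗ₜ[K] (⁅X, a i⁆ ⊗ₜ[K] ⁅b i, b j⁆) := by
        rw [← Finset.sum_neg_distrib]
        refine Finset.sum_congr rfl fun i _ => ?_
        simpa [tmul_sub, sub_tmul, tmul_add, add_tmul] using hflip ((TensorProduct.map LinearMap.id
          ((TensorProduct.mk K g g ⁅X, a i⁆) ∘ₗ (LieAlgebra.ad K g (b i))))
          ∘ₗ (TensorProduct.comm K g g).toLinearMap)
      have t6c : (∑ i : Fin n, ∑ j : Fin n, a j ⊗ₜ[K] (⁅X, a i⁆ ⊗ₜ[K] ⁅b i, b j⁆))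
          = ∑ i : Fin n, ∑ j : Fin n, a i ⊗ₜ[K] (⁅X, a j⁆ ⊗ₜ[K] ⁅b j, b i⁆) :=
        Finset.sum_comm
      rw [t6a, t6b, neg_neg, t6c]
      simp only [← Finset.sum_neg_distrib]
      refine Finset.sum_congr rfl fun i _ => Finset.sum_congr rfl fun j _ => ?_
      rw [← tmul_neg, ← tmul_neg, lie_skew]
    have hVII : (∑ i : Fin n, ∑ j : Fin n, ⁅a i, b j⁆ ⊗ₜ[K] (⁅X, b i⁆ ⊗ₜ[K] a j))
        = -∑ i : Fin n, ∑ j : Fin n, ⁅a i, a j⁆ ⊗ₜ[K] (⁅X, b i⁆ ⊗ₜ[K] b j) := by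
      rw [← Finset.sum_neg_distrib]
      refine Finset.sum_congr rfl fun i _ => ?_
      simpa [tmul_sub, sub_tmul, tmul_add, add_tmul] using hflip ((TensorProduct.map (LieAlgebra.ad K g (a i))
        (TensorProduct.mk K g g ⁅X, b i⁆)) ∘ₗ (TensorProduct.comm K g g).toLinearMap)
    have hVIII : (∑ i : Fin n, ∑ j : Fin n, ⁅X, b i⁆ ⊗ₜ[K] (⁅a i, a j⁆ ⊗ₜ[K] b j))
        = -∑ i : Fin n, ∑ j : Fin n, ⁅X, a i⁆ ⊗ₜ[K] (⁅b i, a j⁆ ⊗ₜ[K] b j) := by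
      simpa [tmul_sub, sub_tmul, tmul_add, add_tmul] using hflip (∑ j, (TensorProduct.map (LieAlgebra.ad K g X)
        (((TensorProduct.mk K g g).flip (b j))
          ∘ₗ ((LieAlgebra.ad K g).toLinearMap.flip (a j))))
        ∘ₗ (TensorProduct.comm K g g).toLinearMap)
    have hIX : (∑ i : Fin n, ∑ j : Fin n, ⁅X, b i⁆ ⊗ₜ[K] (a j ⊗ₜ[K] ⁅a i, b j⁆))
        = -∑ i : Fin n, ∑ j : Fin n, ⁅X, a i⁆ ⊗ₜ[K] (a j ⊗ₜ[K] ⁅b i, b j⁆) := by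
      simpa [tmul_sub, sub_tmul, tmul_add, add_tmul] using hflip (∑ j, (TensorProduct.map (LieAlgebra.ad K g X)
        ((TensorProduct.mk K g g (a j)) ∘ₗ ((LieAlgebra.ad K g).toLinearMap.flip (b j))))
        ∘ₗ (TensorProduct.comm K g g).toLinearMap)
    have hEsum : (∑ i : Fin n, ∑ j : Fin n, ⁅X, ⁅a i, a j⁆⁆ ⊗ₜ[K] (b i ⊗ₜ[K] b j))
        + (∑ i : Fin n, ∑ j : Fin n, ⁅a i, a j⁆ ⊗ₜ[K] (⁅X, b i⁆ ⊗ₜ[K] b j))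
        + (∑ i : Fin n, ∑ j : Fin n, ⁅a i, a j⁆ ⊗ₜ[K] (b i ⊗ₜ[K] ⁅X, b j⁆))
        + (∑ i : Fin n, ∑ j : Fin n, ⁅X, a i⁆ ⊗ₜ[K] (⁅b i, a j⁆ ⊗ₜ[K] b j))
        + (∑ i : Fin n, ∑ j : Fin n, a i ⊗ₜ[K] (⁅X, ⁅b i, a j⁆⁆ ⊗ₜ[K] b j))
        + (∑ i : Fin n, ∑ j : Fin n, a i ⊗ₜ[K] (⁅b i, a j⁆ ⊗ₜ[K] ⁅X, b j⁆))
        + (∑ i : Fin n, ∑ j : Fin n, ⁅X, a i⁆ ⊗ₜ[K] (a j ⊗ₜ[K] ⁅b i, b j⁆))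
        + (∑ i : Fin n, ∑ j : Fin n, a i ⊗ₜ[K] (⁅X, a j⁆ ⊗ₜ[K] ⁅b i, b j⁆))
        + (∑ i : Fin n, ∑ j : Fin n, a i ⊗ₜ[K] (a j ⊗ₜ[K] ⁅X, ⁅b i, b j⁆⁆)) = 0 := by
      have h := DFunLike.congr_arg (TensorProduct.map (LieAlgebra.ad K g X)
          (LinearMap.id : g ⊗[K] g →ₗ[K] g ⊗[K] g)
        + TensorProduct.map LinearMap.id
          (TensorProduct.map (LieAlgebra.ad K g X) LinearMap.id
            + TensorProduct.map LinearMap.id (LieAlgebra.ad K g X))) hCYBE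
      simp only [map_sum, map_add, LinearMap.add_apply, map_tmul, LinearMap.id_coe, id_eq,
        LieAlgebra.ad_apply, tmul_add, map_zero, Finset.sum_add_distrib] at h
      rw [← h]
      abel
    trans ((∑ i : Fin n, ∑ j : Fin n, ⁅⁅X, a i⁆, a j⁆ ⊗ₜ[K] (b j ⊗ₜ[K] b i))
        + (∑ i : Fin n, ∑ j : Fin n, ⁅⁅X, a i⁆, b j⁆ ⊗ₜ[K] (b i ⊗ₜ[K] a j)))
      + (((∑ i : Fin n, ∑ j : Fin n, a j ⊗ₜ[K] (⁅⁅X, a i⁆, b j⁆ ⊗ₜ[K] b i))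
        + (∑ i : Fin n, ∑ j : Fin n, b i ⊗ₜ[K] (⁅⁅X, a i⁆, a j⁆ ⊗ₜ[K] b j)))
      + (((∑ i : Fin n, ∑ j : Fin n, b j ⊗ₜ[K] (b i ⊗ₜ[K] ⁅⁅X, a i⁆, a j⁆))
        + (∑ i : Fin n, ∑ j : Fin n, b i ⊗ₜ[K] (a j ⊗ₜ[K] ⁅⁅X, a i⁆, b j⁆)))
      + ((∑ i : Fin n, ∑ j : Fin n, ⁅a i, a j⁆ ⊗ₜ[K] (b j ⊗ₜ[K] ⁅X, b i⁆))
      + ((∑ i : Fin n, ∑ j : Fin n, a j ⊗ₜ[K] (⁅a i, b j⁆ ⊗ₜ[K] ⁅X, b i⁆))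
      + ((∑ i : Fin n, ∑ j : Fin n, b j ⊗ₜ[K] (⁅X, b i⁆ ⊗ₜ[K] ⁅a i, a j⁆))
      + ((∑ i : Fin n, ∑ j : Fin n, ⁅a i, b j⁆ ⊗ₜ[K] (⁅X, b i⁆ ⊗ₜ[K] a j))
      + ((∑ i : Fin n, ∑ j : Fin n, ⁅X, b i⁆ ⊗ₜ[K] (⁅a i, a j⁆ ⊗ₜ[K] b j))
      + (∑ i : Fin n, ∑ j : Fin n, ⁅X, b i⁆ ⊗ₜ[K] (a j ⊗ₜ[K] ⁅a i, b j⁆)))))))))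
    · abel
    rw [hI, hII, hIII, hIV, hV, hVI, hVII, hVIII, hIX]
    trans -((∑ i : Fin n, ∑ j : Fin n, ⁅X, ⁅a i, a j⁆⁆ ⊗ₜ[K] (b i ⊗ₜ[K] b j))
        + (∑ i : Fin n, ∑ j : Fin n, ⁅a i, a j⁆ ⊗ₜ[K] (⁅X, b i⁆ ⊗ₜ[K] b j))
        + (∑ i : Fin n, ∑ j : Fin n, ⁅a i, a j⁆ ⊗ₜ[K] (b i ⊗ₜ[K] ⁅X, b j⁆))
        + (∑ i : Fin n, ∑ j : Fin n, ⁅X, a i⁆ ⊗ₜ[K] (⁅b i, a j⁆ ⊗ₜ[K] b j))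
        + (∑ i : Fin n, ∑ j : Fin n, a i ⊗ₜ[K] (⁅X, ⁅b i, a j⁆⁆ ⊗ₜ[K] b j))
        + (∑ i : Fin n, ∑ j : Fin n, a i ⊗ₜ[K] (⁅b i, a j⁆ ⊗ₜ[K] ⁅X, b j⁆))
        + (∑ i : Fin n, ∑ j : Fin n, ⁅X, a i⁆ ⊗ₜ[K] (a j ⊗ₜ[K] ⁅b i, b j⁆))
        + (∑ i : Fin n, ∑ j : Fin n, a i ⊗ₜ[K] (⁅X, a j⁆ ⊗ₜ[K] ⁅b i, b j⁆))
        + (∑ i : Fin n, ∑ j : Fin n, a i ⊗ₜ[K] (a j ⊗ₜ[K] ⁅X, ⁅b i, b j⁆⁆)))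
    · abel
    rw [hEsum, neg_zero]
  · intro X Y
    simp only [tlb_tc_apply, tlb_adT_lie]
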